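/- Let ℓ ≥ 1, λ₁ > 0, λ₂ > 0, let H_X and H_Y be real Hilbert spaces, let ŵ_μ, ψ₁, …, ψ_ℓ ∈ H_X, let ŵ_ν, χ₁, …, χ_ℓ ∈ H_Y, let c₁, …, c_ℓ ∈ ℝ, and let Φ₁, …, Φ_ℓ ∈ ℝ^ℓ. Define Q ∈ ℝ^{ℓ×ℓ} by Q_{ij} = ⟨ψ_i, ψ_j⟩ + ⟨χ_i, χ_j⟩, z_j = ⟨ŵ_μ, ψ_j⟩ + ⟨ŵ_ν, χ_j⟩ − 2λ₂ c_j, and q² = ‖ŵ_μ‖² + ‖ŵ_ν‖². Then for every primal-feasible triple (u, v, B), i.e., u ∈ H_X, v ∈ H_Y, B a positive semidefinite ℓ×ℓ matrix with c_j − ⟨u, ψ_j⟩ − ⟨v, χ_j⟩ = Φ_jᵀ B Φ_j for all j ∈ [ℓ], and every dual-feasible γ ∈ ℝ^ℓ, i.e., Σ_{j=1}^ℓ γ_j Φ_j Φ_jᵀ + λ₁·Id ⪰ 0, one has ⟨u, ŵ_μ⟩ + ⟨v, ŵ_ν⟩ − λ₁ tr(B) − λ₂(‖u‖² + ‖v‖²)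 ≤ (1/(4λ₂)) γᵀ Q γ − (1/(2λ₂)) Σ_{j=1}^ℓ γ_j z_j + q²/(4λ₂). -/

import Mathlib

open scoped InnerProductSpace

lemma psd_diag_nonneg {n : Type*} [Fintype n] [DecidableEq n]
    {M : Matrix n n ℝ} (hM : M.PosSemidef) (i : n) : 0 ≤ M i i := by
  exact hM.diag_nonneg

lemma psd_trace_nonneg {n : Type*} [Fintype n] [DecidableEq n]
    {M : Matrix n n ℝ} (hM : M.PosSemidef) : 0 ≤ M.trace :=
  Finset.sum_nonneg fun i _ => psd_diag_nonneg hM i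

lemma psd_trace_mul_nonneg {n : Type*} [Fintype n] [DecidableEq n]
    {M B : Matrix n n ℝ} (hM : M.PosSemidef) (hB : B.PosSemidef) :
    0 ≤ (M * B).trace := by
  obtain ⟨C, rfl⟩ : ∃ C : Matrix n n ℝ, B = Matrix.conjTranspose C * C := by
    open scoped MatrixOrder in
    exact CStarAlgebra.nonneg_iff_eq_star_mul_self.mp hB.nonneg
  rw [← Matrix.mul_assoc, Matrix.trace_mul_cycle]
  exact psd_trace_nonneg (hM.mul_mul_conjTranspose_same C)

lemma quad_bound {H : Type*} [NormedAddCommGroup H] [InnerProductSpace ℝ H]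
    (lam : ℝ) (hlam : 0 < lam) (u a : H) :
    ⟪u, a⟫_ℝ - lam * ‖u‖ ^ 2 ≤ ‖a‖ ^ 2 / (4 * lam) := by
  have h0 : (0:ℝ) ≤ ‖(2 * lam) • u - a‖ ^ 2 := sq_nonneg _
  have h1 : ‖(2 * lam) • u - a‖ ^ 2
      = (2*lam)^2 * ‖u‖^2 - 2 * ((2*lam) * ⟪u, a⟫_ℝ) + ‖a‖^2 := by
    rw [norm_sub_sq_real, real_inner_smul_left, norm_smul]
    rw [Real.norm_eq_abs, abs_of_pos (by positivity)]
    ring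
  rw [h1] at h0
  rw [div_eq_inv_mul]
  have h4 : (0:ℝ) < 4 * lam := by positivity
  rw [← sub_nonneg]
  have : (4*lam)⁻¹ * ‖a‖^2 - (⟪u, a⟫_ℝ - lam * ‖u‖^2)
      = (4*lam)⁻¹ * ((2*lam)^2 * ‖u‖^2 - 2 * ((2*lam) * ⟪u, a⟫_ℝ) + ‖a‖^2) := by
    field_simp; ring
  rw [this]
  positivity

lemma trace_vecMulVec_mul {n : Type*} [Fintype n] [DecidableEq n]
    (x : n → ℝ) (B : Matrix n n ℝ) (hB : B.IsHermitian) :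
    (Matrix.vecMulVec x x * B).trace = dotProduct x (B.mulVec x) := by
  simp only [Matrix.trace, Matrix.diag, Matrix.mul_apply, Matrix.vecMulVec_apply,
    dotProduct, Matrix.mulVec]
  rw [Finset.sum_comm]
  refine Finset.sum_congr rfl fun j _ => ?_
  rw [Finset.mul_sum]
  refine Finset.sum_congr rfl fun i _ => ?_
  have : B j i = B i j := by
    conv_lhs => rw [← hB.eq]
    simp [Matrix.conjTranspose_apply]
  rw [this]; ring

/-- Weak duality between the finite-dimensional regularized
sum-of-squares problem and its dual semidefinite program. -/
theorem weak_duality_sos_ot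
    (l : ℕ) (hl : 1 ≤ l) (lam1 lam2 : ℝ) (hlam1 : 0 < lam1) (hlam2 : 0 < lam2)
    {HX HY : Type*}
    [NormedAddCommGroup HX] [InnerProductSpace ℝ HX] [CompleteSpace HX]
    [NormedAddCommGroup HY] [InnerProductSpace ℝ HY] [CompleteSpace HY]
    (wmu : HX) (psi : Fin l → HX) (wnu : HY) (chi : Fin l → HY)
    (c : Fin l → ℝ) (Phi : Fin l → Fin l → ℝ)
    (Q : Matrix (Fin l) (Fin l) ℝ)
    (hQ : Q = Matrix.of fun i j => ⟪psi i, psi j⟫_ℝ + ⟪chi i, chi j⟫_ℝ)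
    (z : Fin l → ℝ)
    (hz : ∀ j, z j = ⟪wmu, psi j⟫_ℝ + ⟪wnu, chi j⟫_ℝ - 2 * lam2 * c j)
    (q2 : ℝ) (hq2 : q2 = ‖wmu‖ ^ 2 + ‖wnu‖ ^ 2)
    -- primal feasible triple (u, v, B)
    (u : HX) (v : HY) (B : Matrix (Fin l) (Fin l) ℝ) (hB : B.PosSemidef)
    (hfeas : ∀ j, c j - ⟪u, psi j⟫_ℝ - ⟪v, chi j⟫_ℝ =
      dotProduct (Phi j) (B.mulVec (Phi j)))
    -- dual feasible γ
    (γ : Fin l → ℝ)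
    (hγ : (∑ j, γ j • Matrix.vecMulVec (Phi j) (Phi j) +
      lam1 • (1 : Matrix (Fin l) (Fin l) ℝ)).PosSemidef) :
    ⟪u, wmu⟫_ℝ + ⟪v, wnu⟫_ℝ - lam1 * B.trace - lam2 * (‖u‖ ^ 2 + ‖v‖ ^ 2) ≤
      (1 / (4 * lam2)) * dotProduct γ (Q.mulVec γ)
        - (1 / (2 * lam2)) * ∑ j, γ j * z j + q2 / (4 * lam2) := by
  set s : HX := ∑ j, γ j • psi j with hs_def
  set t : HY := ∑ j, γ j • chi j with ht_def
  -- scalar sums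
  have hus : ⟪u, s⟫_ℝ = ∑ j, γ j * ⟪u, psi j⟫_ℝ := by
    simp [hs_def, inner_sum, real_inner_smul_right]
  have hvt : ⟪v, t⟫_ℝ = ∑ j, γ j * ⟪v, chi j⟫_ℝ := by
    simp [ht_def, inner_sum, real_inner_smul_right]
  have hws : ⟪wmu, s⟫_ℝ = ∑ j, γ j * ⟪wmu, psi j⟫_ℝ := by
    simp [hs_def, inner_sum, real_inner_smul_right]
  have hwt : ⟪wnu, t⟫_ℝ = ∑ j, γ j * ⟪wnu, chi j⟫_ℝ := by
    simp [ht_def, inner_sum, real_inner_smul_right]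
  have hss : ‖s‖ ^ 2 = ∑ i, ∑ j, γ i * γ j * ⟪psi i, psi j⟫_ℝ := by
    rw [← real_inner_self_eq_norm_sq, hs_def, sum_inner]
    refine Finset.sum_congr rfl fun i _ => ?_
    rw [inner_sum]
    refine Finset.sum_congr rfl fun j _ => ?_
    rw [real_inner_smul_left, real_inner_smul_right]; ring
  have htt : ‖t‖ ^ 2 = ∑ i, ∑ j, γ i * γ j * ⟪chi i, chi j⟫_ℝ := by
    rw [← real_inner_self_eq_norm_sq, ht_def, sum_inner]
    refine Finset.sum_congr rfl fun i _ => ?_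
    rw [inner_sum]
    refine Finset.sum_congr rfl fun j _ => ?_
    rw [real_inner_smul_left, real_inner_smul_right]; ring
  -- quadratic form
  have hW : dotProduct γ (Q.mulVec γ) =
      (∑ i, ∑ j, γ i * γ j * ⟪psi i, psi j⟫_ℝ)
        + ∑ i, ∑ j, γ i * γ j * ⟪chi i, chi j⟫_ℝ := by
    subst hQ
    rw [← Finset.sum_add_distrib]
    simp only [dotProduct, Matrix.mulVec, Matrix.of_apply]
    refine Finset.sum_congr rfl fun i _ => ?_
    rw [Finset.mul_sum, ← Finset.sum_add_distrib]
    refine Finset.sum_congr rfl fun j _ => ?_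
    ring
  -- z sum
  have hZ : ∑ j, γ j * z j =
      (∑ j, γ j * ⟪wmu, psi j⟫_ℝ) + (∑ j, γ j * ⟪wnu, chi j⟫_ℝ)
        - 2 * lam2 * ∑ j, γ j * c j := by
    rw [← Finset.sum_add_distrib, Finset.mul_sum, ← Finset.sum_sub_distrib]
    refine Finset.sum_congr rfl fun j _ => ?_
    rw [hz j]; ring
  -- feasibility summed
  have hfs : (∑ j, γ j * c j) - (∑ j, γ j * ⟪u, psi j⟫_ℝ)
      - (∑ j, γ j * ⟪v, chi j⟫_ℝ)
      = ∑ j, γ j * dotProduct (Phi j) (B.mulVec (Phi j)) := by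
    rw [← Finset.sum_sub_distrib, ← Finset.sum_sub_distrib]
    refine Finset.sum_congr rfl fun j _ => ?_
    rw [← hfeas j]; ring
  -- trace
  have htreq : ((∑ j, γ j • Matrix.vecMulVec (Phi j) (Phi j) +
      lam1 • (1 : Matrix (Fin l) (Fin l) ℝ)) * B).trace
      = (∑ j, γ j * dotProduct (Phi j) (B.mulVec (Phi j))) + lam1 * B.trace := by
    rw [Matrix.add_mul, Matrix.trace_add, Matrix.sum_mul, Matrix.trace_sum,
      Matrix.smul_mul, Matrix.one_mul, Matrix.trace_smul]
    congr 1
    exact Finset.sum_congr rfl fun j _ => by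
      rw [Matrix.smul_mul, Matrix.trace_smul, trace_vecMulVec_mul _ _ hB.1]
      simp
  have htr : 0 ≤ (∑ j, γ j * dotProduct (Phi j) (B.mulVec (Phi j)))
      + lam1 * B.trace := by
    rw [← htreq]; exact psd_trace_mul_nonneg hγ hB
  -- quadratic bounds
  have hua := quad_bound lam2 hlam2 u (wmu - s)
  have hvb := quad_bound lam2 hlam2 v (wnu - t)
  have ha : ‖wmu - s‖ ^ 2 = ‖wmu‖ ^ 2
      - 2 * ∑ j, γ j * ⟪wmu, psi j⟫_ℝ
      + ∑ i, ∑ j, γ i * γ j * ⟪psi i, psi j⟫_ℝ := by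
    rw [norm_sub_sq_real, hws, hss]
  have hb : ‖wnu - t‖ ^ 2 = ‖wnu‖ ^ 2
      - 2 * ∑ j, γ j * ⟪wnu, chi j⟫_ℝ
      + ∑ i, ∑ j, γ i * γ j * ⟪chi i, chi j⟫_ℝ := by
    rw [norm_sub_sq_real, hwt, htt]
  rw [ha] at hua
  rw [hb] at hvb
  have hua' : ⟪u, wmu⟫_ℝ - (∑ j, γ j * ⟪u, psi j⟫_ℝ) - lam2 * ‖u‖ ^ 2 ≤
      (‖wmu‖ ^ 2 - 2 * ∑ j, γ j * ⟪wmu, psi j⟫_ℝ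
        + ∑ i, ∑ j, γ i * γ j * ⟪psi i, psi j⟫_ℝ) / (4 * lam2) := by
    rw [inner_sub_right, hus] at hua; exact hua
  have hvb' : ⟪v, wnu⟫_ℝ - (∑ j, γ j * ⟪v, chi j⟫_ℝ) - lam2 * ‖v‖ ^ 2 ≤
      (‖wnu‖ ^ 2 - 2 * ∑ j, γ j * ⟪wnu, chi j⟫_ℝ
        + ∑ i, ∑ j, γ i * γ j * ⟪chi i, chi j⟫_ℝ) / (4 * lam2) := by
    rw [inner_sub_right, hvt] at hvb; exact hvb
  -- key identity for the dual objective
  have hkey : (1 / (4 * lam2)) * ((∑ i, ∑ j, γ i * γ j * ⟪psi i, psi j⟫_ℝ)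
        + ∑ i, ∑ j, γ i * γ j * ⟪chi i, chi j⟫_ℝ)
      - (1 / (2 * lam2)) * ((∑ j, γ j * ⟪wmu, psi j⟫_ℝ)
        + (∑ j, γ j * ⟪wnu, chi j⟫_ℝ) - 2 * lam2 * ∑ j, γ j * c j)
      + q2 / (4 * lam2)
      = (‖wmu‖ ^ 2 - 2 * ∑ j, γ j * ⟪wmu, psi j⟫_ℝ
          + ∑ i, ∑ j, γ i * γ j * ⟪psi i, psi j⟫_ℝ) / (4 * lam2)
        + (‖wnu‖ ^ 2 - 2 * ∑ j, γ j * ⟪wnu, chi j⟫_ℝ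
          + ∑ i, ∑ j, γ i * γ j * ⟪chi i, chi j⟫_ℝ) / (4 * lam2)
        + ∑ j, γ j * c j := by
    rw [hq2]
    field_simp
    ring
  rw [hW, hZ, hkey]
  linarith [hua', hvb', hfs, htr]
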